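/- arXiv:math-ph/0207036 — 2 statements merged into one kernel-verified Lean document; each statement's English description precedes it below -/
import Mathlib

section
/- Let Λ > 0. There exists a constant C, depending only on Λ, such that for every 0 < α ≤ 1, every n ≥ 0, and every ψ ∈ L²(ℝ³ × (ℝ³)ⁿ; ℂ) with ‖Pψ‖ < ∞ and (ψ, H_f ψ) < ∞: | ∫ |H(k_{n+1})|² |ψ(l,k₁,…,kₙ)|² / ( |P_{n+1}|² + H_f^{n+1} + α³ )² dl dk₁⋯dk_{n+1} − ‖ψ‖² ∫_{ℝ³} |H(k)|² / ( |k|² + |k| )² dk | ≤ C ( α³ ‖ψ‖² + ‖ψ‖ ‖Pψ‖ + ‖Pψ‖² + (ψ, H_f ψ) ). -/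
open MeasureTheory Real

open Set Metric

local notation "E3" => EuclideanSpace ℝ (Fin 3)

lemma radial_integrable (Λ : ℝ) (s : ℕ) (hs1 : 1 ≤ s) (hs : s ≤ 2) :
    Integrable (fun k : E3 => if ‖k‖ ≤ Λ then (‖k‖ ^ s)⁻¹ else 0) := by
  set f : ℝ → ℝ := fun r => if r ≤ Λ then (r ^ s)⁻¹ else 0 with hf
  have hmeasf : Measurable f := by
    apply Measurable.ite (measurableSet_le measurable_id measurable_const) <;> fun_prop
  have hdim : Module.finrank ℝ E3 = 3 := by simp [finrank_euclideanSpace]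
  have key : Integrable (fun k : E3 => f ‖k‖) := by
    rw [← restrict_compl_singleton (0 : E3) (μ := volume)]
    rw [← map_comap_subtype_coe (measurableSet_singleton (0:E3)).compl,
      (MeasurableEmbedding.subtype_coe (measurableSet_singleton (0:E3)).compl).integrable_map_iff]
    have hT := Measure.measurePreserving_homeomorphUnitSphereProd (volume : Measure E3)
    have hiff := hT.integrable_comp_emb (Homeomorph.measurableEmbedding _)
      (g := fun q : sphere (0:E3) 1 × Ioi (0:ℝ) => f q.2.1)
    have e : ((fun k : E3 => f ‖k‖) ∘ (Subtype.val : ({(0:E3)}ᶜ : Set E3) → E3)) =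
        ((fun q : sphere (0:E3) 1 × Ioi (0:ℝ) => f q.2.1) ∘ ⇑(homeomorphUnitSphereProd E3)) := by
        funext x; simp [homeomorphUnitSphereProd]
    rw [e, hiff]
    -- product integrability: constant in first coordinate (finite measure), radial in second
    have hrad : Integrable (fun r : Ioi (0:ℝ) => f r.1)
        (Measure.volumeIoiPow (Module.finrank ℝ E3 - 1)) := by
      rw [Measure.volumeIoiPow]
      rw [integrable_withDensity_iff (by fun_prop) (Filter.Eventually.of_forall fun _ => ENNReal.ofReal_lt_top)]
      have e2 : (fun r : Ioi (0:ℝ) => f r.1 * (ENNReal.ofReal (r.1 ^ (Module.finrank ℝ E3 - 1))).toReal)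
          = ((fun r : ℝ => f r * r ^ (Module.finrank ℝ E3 - 1)) ∘ Subtype.val) := by
        funext r
        simp [ENNReal.toReal_ofReal (pow_nonneg (le_of_lt r.2) _)]
      rw [e2, ← (MeasurableEmbedding.subtype_coe measurableSet_Ioi).integrable_map_iff,
        map_comap_subtype_coe measurableSet_Ioi]
      -- now IntegrableOn (fun r => f r * r ^ 2) (Ioi 0)
      rw [hdim]
      have hbd : ∀ r ∈ Ioi (0:ℝ), ‖f r * r ^ (3-1)‖ ≤ (Ioc (0:ℝ) Λ).indicator (fun _ => max 1 (Λ^2)) r := by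
        intro r hr
        rw [mem_Ioi] at hr
        by_cases hrΛ : r ≤ Λ
        · have hmem : r ∈ Ioc (0:ℝ) Λ := ⟨hr, hrΛ⟩
          rw [indicator_of_mem hmem]
          simp only [hf, if_pos hrΛ]
          rw [Real.norm_eq_abs, abs_of_nonneg (by positivity)]
          have : (r ^ s)⁻¹ * r ^ (3-1) = r ^ (2 - s) := by
            rw [eq_comm, pow_sub₀ _ (ne_of_gt hr) hs]
            ring
          rw [this]
          rcases le_or_gt r 1 with h1 | h1
          · exact le_max_of_le_left (pow_le_one₀ hr.le h1)
          · refine le_max_of_le_right ?_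
            calc r ^ (2 - s) ≤ r ^ 2 := pow_le_pow_right₀ h1.le (by omega)
            _ ≤ Λ ^ 2 := by gcongr
        · simp only [hf, if_neg hrΛ, zero_mul, norm_zero]
          exact indicator_nonneg (fun _ _ => le_max_of_le_left zero_le_one) r
      refine Integrable.mono' ?_ ?_ (ae_restrict_of_forall_mem measurableSet_Ioi hbd)
      · rw [integrable_indicator_iff measurableSet_Ioc]
        exact integrableOn_const measure_Ioc_lt_top.ne
      · exact ((hmeasf.mul (measurable_id.pow_const _)).aestronglyMeasurable).restrict
    have hconst : Integrable (fun _ : sphere (0:E3) 1 => (1:ℝ)) (volume.toSphere) :=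
      integrable_const 1
    have := hconst.mul_prod hrad
    simpa using this
  exact key


lemma cs_integral {X : Type*} [MeasurableSpace X] {μ : Measure X} {u v : X → ℝ}
    (hu2 : Integrable (fun x => u x ^ 2) μ) (hv2 : Integrable (fun x => v x ^ 2) μ)
    (huv : Integrable (fun x => u x * v x) μ) :
    ∫ x, u x * v x ∂μ ≤ Real.sqrt (∫ x, u x ^ 2 ∂μ) * Real.sqrt (∫ x, v x ^ 2 ∂μ) := by
  set A := ∫ x, u x ^ 2 ∂μ with hA
  set B := ∫ x, v x ^ 2 ∂μ with hB
  set Y := ∫ x, u x * v x ∂μ with hY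
  have hA0 : 0 ≤ A := integral_nonneg fun x => sq_nonneg _
  have hB0 : 0 ≤ B := integral_nonneg fun x => sq_nonneg _
  have key : ∀ t : ℝ, 0 ≤ t ^ 2 * A - 2 * t * Y + B := by
    intro t
    have h0 : 0 ≤ ∫ x, (t * u x - v x) ^ 2 ∂μ := integral_nonneg fun x => sq_nonneg _
    have he : ∫ x, (t * u x - v x) ^ 2 ∂μ = t ^ 2 * A - 2 * t * Y + B := by
      have e1 : (fun x => (t * u x - v x) ^ 2)
          = fun x => (t ^ 2 * u x ^ 2 - 2 * t * (u x * v x)) + v x ^ 2 := by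
        funext x; ring
      have i1 : Integrable (fun x => t ^ 2 * u x ^ 2 - 2 * t * (u x * v x)) μ :=
        (hu2.const_mul (t ^ 2)).sub (huv.const_mul (2 * t))
      rw [e1, integral_add i1 hv2,
        integral_sub (hu2.const_mul (t ^ 2)) (huv.const_mul (2 * t)),
        MeasureTheory.integral_const_mul, MeasureTheory.integral_const_mul]
    linarith [he ▸ h0]
  rcases eq_or_lt_of_le hA0 with hAz | hApos
  · -- A = 0 : then Y ≤ 0
    have hYle : Y ≤ 0 := by
      by_contra hpos
      push_neg at hpos
      have := key ((B + 1) / (2 * Y))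
      rw [← hAz] at this
      have h2Y : (0:ℝ) < 2 * Y := by linarith
      have : 0 ≤ -(B + 1) + B := by
        have e : 2 * ((B + 1) / (2 * Y)) * Y = B + 1 := by field_simp
        nlinarith [this]
      linarith
    exact hYle.trans (by positivity)
  · have hYsq : Y ^ 2 ≤ A * B := by
      have := key (Y / A)
      have e : (Y / A) ^ 2 * A - 2 * (Y / A) * Y + B = B - Y ^ 2 / A := by
        field_simp; ring
      rw [e] at this
      have h' : Y ^ 2 / A ≤ B := by linarith
      have h'' := (div_le_iff₀ hApos).mp h'
      nlinarith
    calc Y ≤ |Y| := le_abs_self Y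
    _ = Real.sqrt (Y ^ 2) := (Real.sqrt_sq_eq_abs Y).symm
    _ ≤ Real.sqrt (A * B) := Real.sqrt_le_sqrt hYsq
    _ = Real.sqrt A * Real.sqrt B := Real.sqrt_mul hA0 B

lemma scalar_bound {x D B Δ : ℝ} (hx : 0 < x) (hD : x ≤ D) (hB : x ≤ B) (hΔ : 0 ≤ Δ)
    (hdiff : |D - B| ≤ Δ) :
    |(x / (2 * π ^ 2)) / D ^ 2 - (x / (2 * π ^ 2)) / B ^ 2| ≤ Δ / (π ^ 2 * x ^ 2) := by
  have hD0 : 0 < D := lt_of_lt_of_le hx hD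
  have hB0 : 0 < B := lt_of_lt_of_le hx hB
  have hπ := Real.pi_ne_zero
  have e : (x / (2 * π ^ 2)) / D ^ 2 - (x / (2 * π ^ 2)) / B ^ 2
      = (x / (2 * π ^ 2)) * (B ^ 2 - D ^ 2) / (D ^ 2 * B ^ 2) := by
    field_simp
  rw [e, abs_div, abs_mul, abs_of_pos (by positivity : (0:ℝ) < D ^ 2 * B ^ 2),
    abs_of_pos (by positivity : (0:ℝ) < x / (2 * π ^ 2)),
    div_le_div_iff₀ (by positivity) (by positivity)]
  have h1 : |B ^ 2 - D ^ 2| ≤ Δ * (B + D) := by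
    have e2 : B ^ 2 - D ^ 2 = (B - D) * (B + D) := by ring
    rw [e2, abs_mul, abs_of_pos (by linarith : (0:ℝ) < B + D)]
    exact mul_le_mul_of_nonneg_right (by rwa [abs_sub_comm]) (by linarith)
  have h2 : x ^ 3 * (B + D) ≤ 2 * (D ^ 2 * B ^ 2) := by
    have k1 : x * x ≤ D * B := mul_le_mul hD hB hx.le hD0.le
    nlinarith [mul_le_mul_of_nonneg_left k1 (mul_pos hD0 hB0).le,
      mul_le_mul_of_nonneg_left hD (by positivity : (0:ℝ) ≤ x * x * B),
      mul_le_mul_of_nonneg_left hB (by positivity : (0:ℝ) ≤ x * x * D)]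
  calc x / (2 * π ^ 2) * |B ^ 2 - D ^ 2| * (π ^ 2 * x ^ 2)
      ≤ x / (2 * π ^ 2) * (Δ * (B + D)) * (π ^ 2 * x ^ 2) := by
        apply mul_le_mul_of_nonneg_right (mul_le_mul_of_nonneg_left h1 (by positivity))
        positivity
    _ = Δ * (x ^ 3 * (B + D)) / 2 := by field_simp
    _ ≤ Δ * (2 * (D ^ 2 * B ^ 2)) / 2 := by
        apply div_le_div_of_nonneg_right ?_ ?_
        · exact mul_le_mul_of_nonneg_left h2 hΔ
        · norm_num
    _ = Δ * (D ^ 2 * B ^ 2) := by ring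


lemma pointwise_bound (Λ α S : ℝ) (hα : 0 < α) (hS : 0 ≤ S) (P k : E3) :
    |(if ‖k‖ ≤ Λ then ‖k‖ / (2 * π ^ 2) else 0) / (‖P - k‖ ^ 2 + (S + ‖k‖) + α ^ 3) ^ 2
      - (if ‖k‖ ≤ Λ then ‖k‖ / (2 * π ^ 2) else 0) / (‖k‖ ^ 2 + ‖k‖) ^ 2|
    ≤ (‖P‖ ^ 2 + S + α ^ 3) / π ^ 2 * (if ‖k‖ ≤ Λ then (‖k‖ ^ 2)⁻¹ else 0)
      + 2 * ‖P‖ / π ^ 2 * (if ‖k‖ ≤ Λ then ‖k‖⁻¹ else 0) := by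
  by_cases hk : ‖k‖ ≤ Λ
  · simp only [if_pos hk]
    by_cases hk0 : k = 0
    · subst hk0
      simp
    · have hx : 0 < ‖k‖ := norm_pos_iff.mpr hk0
      have hD : ‖k‖ ≤ ‖P - k‖ ^ 2 + (S + ‖k‖) + α ^ 3 := by
        have := sq_nonneg ‖P - k‖
        have := pow_pos hα 3
        linarith
      have hB : ‖k‖ ≤ ‖k‖ ^ 2 + ‖k‖ := by nlinarith
      have hΔ : (0:ℝ) ≤ ‖P‖ ^ 2 + S + α ^ 3 + 2 * ‖P‖ * ‖k‖ := by positivity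
      have hdiff : |(‖P - k‖ ^ 2 + (S + ‖k‖) + α ^ 3) - (‖k‖ ^ 2 + ‖k‖)|
          ≤ ‖P‖ ^ 2 + S + α ^ 3 + 2 * ‖P‖ * ‖k‖ := by
        have hexp : ‖P - k‖ ^ 2 = ‖P‖ ^ 2 - 2 * (inner ℝ P k : ℝ) + ‖k‖ ^ 2 :=
          norm_sub_sq_real P k
        have hi : |(inner ℝ P k : ℝ)| ≤ ‖P‖ * ‖k‖ := abs_real_inner_le_norm P k
        rw [abs_le] at hi ⊢
        rw [hexp]
        constructor <;> nlinarith [hi.1, hi.2, sq_nonneg ‖P‖, pow_pos hα 3, hS]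
      have := scalar_bound hx hD hB hΔ hdiff
      refine this.trans (le_of_eq ?_)
      have hπ := Real.pi_ne_zero
      field_simp
  · simp only [if_neg hk]
    simp


set_option maxHeartbeats 2000000 in
/-- Diagonal term `I_n` of Step 1 of Lemma B.1: with form factor
`|H(k)|² = χ(|k|)²|k|/(2π²)`, `P_{n+1} = l − Σᵢkᵢ − k_{n+1}`,
`H_f^{n+1} = Σᵢ|kᵢ| + |k_{n+1}|`, there is `C = C(Λ)` such that for all
`0 < α ≤ 1`, all `n` and all `ψ`,
`| ∫ |H(k_{n+1})|²|ψ|²/(|P_{n+1}|² + H_f^{n+1} + α³)² − ‖ψ‖² ∫ |H(k)|²/(|k|²+|k|)² dk |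
  ≤ C (α³‖ψ‖² + ‖ψ‖‖Pψ‖ + ‖Pψ‖² + (ψ,H_fψ))`. -/
theorem diagonal_term_In (Λ : ℝ) (hΛ : 0 < Λ) :
    ∃ C : ℝ, ∀ (α : ℝ), 0 < α → α ≤ 1 → ∀ (n : ℕ)
      (ψ : EuclideanSpace ℝ (Fin 3) → (Fin n → EuclideanSpace ℝ (Fin 3)) → ℂ),
      AEStronglyMeasurable
        (fun p : EuclideanSpace ℝ (Fin 3) × (Fin n → EuclideanSpace ℝ (Fin 3)) =>
          ψ p.1 p.2) volume →
      Integrable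
        (fun p : EuclideanSpace ℝ (Fin 3) × (Fin n → EuclideanSpace ℝ (Fin 3)) =>
          ‖ψ p.1 p.2‖ ^ 2) volume →
      Integrable
        (fun p : EuclideanSpace ℝ (Fin 3) × (Fin n → EuclideanSpace ℝ (Fin 3)) =>
          ‖p.1 - ∑ i, p.2 i‖ ^ 2 * ‖ψ p.1 p.2‖ ^ 2) volume →
      Integrable
        (fun p : EuclideanSpace ℝ (Fin 3) × (Fin n → EuclideanSpace ℝ (Fin 3)) =>
          (∑ i, ‖p.2 i‖) * ‖ψ p.1 p.2‖ ^ 2) volume →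
      |(∫ p : (EuclideanSpace ℝ (Fin 3) × (Fin n → EuclideanSpace ℝ (Fin 3))) ×
            EuclideanSpace ℝ (Fin 3),
          (if ‖p.2‖ ≤ Λ then ‖p.2‖ / (2 * π ^ 2) else 0) *
            ‖ψ p.1.1 p.1.2‖ ^ 2 /
            (‖p.1.1 - (∑ i, p.1.2 i) - p.2‖ ^ 2 +
              ((∑ i, ‖p.1.2 i‖) + ‖p.2‖) + α ^ 3) ^ 2) -
        (∫ p : EuclideanSpace ℝ (Fin 3) × (Fin n → EuclideanSpace ℝ (Fin 3)),
            ‖ψ p.1 p.2‖ ^ 2) *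
          ∫ k in {k : EuclideanSpace ℝ (Fin 3) | ‖k‖ ≤ Λ},
            (‖k‖ / (2 * π ^ 2)) / (‖k‖ ^ 2 + ‖k‖) ^ 2| ≤
      C * (α ^ 3 *
            (∫ p : EuclideanSpace ℝ (Fin 3) × (Fin n → EuclideanSpace ℝ (Fin 3)),
              ‖ψ p.1 p.2‖ ^ 2) +
          Real.sqrt
              (∫ p : EuclideanSpace ℝ (Fin 3) ×
                  (Fin n → EuclideanSpace ℝ (Fin 3)), ‖ψ p.1 p.2‖ ^ 2) *
            Real.sqrt
              (∫ p : EuclideanSpace ℝ (Fin 3) ×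
                  (Fin n → EuclideanSpace ℝ (Fin 3)),
                ‖p.1 - ∑ i, p.2 i‖ ^ 2 * ‖ψ p.1 p.2‖ ^ 2) +
          (∫ p : EuclideanSpace ℝ (Fin 3) × (Fin n → EuclideanSpace ℝ (Fin 3)),
            ‖p.1 - ∑ i, p.2 i‖ ^ 2 * ‖ψ p.1 p.2‖ ^ 2) +
          ∫ p : EuclideanSpace ℝ (Fin 3) × (Fin n → EuclideanSpace ℝ (Fin 3)),
            (∑ i, ‖p.2 i‖) * ‖ψ p.1 p.2‖ ^ 2) := by
  classical
  have hπ : (0:ℝ) < π := Real.pi_pos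
  -- radial cutoff weights
  set c1 : E3 → ℝ := fun k => if ‖k‖ ≤ Λ then ‖k‖⁻¹ else 0 with hc1def
  set c2 : E3 → ℝ := fun k => if ‖k‖ ≤ Λ then (‖k‖ ^ 2)⁻¹ else 0 with hc2def
  have hc1 : Integrable c1 := by
    have := radial_integrable Λ 1 le_rfl one_le_two
    simpa [pow_one] using this
  have hc2 : Integrable c2 := radial_integrable Λ 2 one_le_two le_rfl
  have hC1_0 : 0 ≤ ∫ k, c1 k := integral_nonneg fun k => by
    dsimp [c1]; split <;> positivity
  have hC2_0 : 0 ≤ ∫ k, c2 k := integral_nonneg fun k => by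
    dsimp [c2]; split <;> positivity
  set C1 := ∫ k, c1 k
  set C2 := ∫ k, c2 k
  refine ⟨C2 / π ^ 2 + 2 * C1 / π ^ 2, ?_⟩
  intro α hα hα1 n ψ hmeas hψ2 hP2 hHf
  set X := EuclideanSpace ℝ (Fin 3) × (Fin n → EuclideanSpace ℝ (Fin 3)) with hXdef
  -- abbreviations
  set w : X → ℝ := fun p => ‖ψ p.1 p.2‖ ^ 2 with hwdef
  set P : X → E3 := fun p => p.1 - ∑ i, p.2 i with hPdef
  set S : X → ℝ := fun p => ∑ i, ‖p.2 i‖ with hSdef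
  set hfun : E3 → ℝ := fun k => if ‖k‖ ≤ Λ then ‖k‖ / (2 * π ^ 2) else 0 with hhdef
  set g : E3 → ℝ := fun k => hfun k / (‖k‖ ^ 2 + ‖k‖) ^ 2 with hgdef
  set f : X → E3 → ℝ := fun p k => hfun k / (‖P p - k‖ ^ 2 + (S p + ‖k‖) + α ^ 3) ^ 2
    with hfdef
  have hw0 : ∀ p, 0 ≤ w p := fun p => sq_nonneg _
  have hS0 : ∀ p, 0 ≤ S p := fun p => Finset.sum_nonneg fun i _ => norm_nonneg _
  have hα3 : (0:ℝ) < α ^ 3 := pow_pos hα 3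
  -- measurability facts
  have hwm : AEStronglyMeasurable w volume := hψ2.aestronglyMeasurable
  have hPc : Continuous P := by
    apply Continuous.sub continuous_fst
    exact continuous_finset_sum _ fun i _ => (continuous_apply i).comp continuous_snd
  have hSc : Continuous S :=
    continuous_finset_sum _ fun i _ => ((continuous_apply i).comp continuous_snd).norm
  have hhm : Measurable hfun := by
    apply Measurable.ite (measurableSet_le measurable_norm measurable_const)
    · exact measurable_norm.div_const _
    · exact measurable_const
  have hh0 : ∀ k, 0 ≤ hfun k := fun k => by
    dsimp [hfun]; split <;> positivity
  -- key comparison : hfun k / d^2 ≤ c1 k / (2π²) whenever ‖k‖ ≤ d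
  have hkey : ∀ (k : E3) (d : ℝ), ‖k‖ ≤ d →
      hfun k / d ^ 2 ≤ c1 k / (2 * π ^ 2) := by
    intro k d hd
    dsimp [hfun, c1]
    by_cases hk : ‖k‖ ≤ Λ
    · simp only [if_pos hk]
      rcases eq_or_lt_of_le (norm_nonneg k) with h0 | h0
      · simp [← h0]
      · have hd0 : 0 < d := lt_of_lt_of_le h0 hd
        have hkk : ‖k‖ ^ 2 ≤ d ^ 2 := by nlinarith
        have h1 : ‖k‖ / (2 * π ^ 2) / d ^ 2 ≤ ‖k‖ / (2 * π ^ 2) / ‖k‖ ^ 2 := by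
          rw [div_le_div_iff₀ (by positivity) (by positivity)]
          exact mul_le_mul_of_nonneg_left hkk (by positivity)
        refine h1.trans (le_of_eq ?_)
        field_simp
    · simp [if_neg hk]
  have hDge : ∀ (p : X) (k : E3), ‖k‖ ≤ ‖P p - k‖ ^ 2 + (S p + ‖k‖) + α ^ 3 := by
    intro p k
    have := sq_nonneg ‖P p - k‖
    have := hS0 p
    linarith
  have hBge : ∀ k : E3, ‖k‖ ≤ ‖k‖ ^ 2 + ‖k‖ := fun k => by nlinarith [sq_nonneg ‖k‖]
  have hfle : ∀ p k, f p k ≤ c1 k / (2 * π ^ 2) := fun p k => hkey k _ (hDge p k)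
  have hgle : ∀ k, g k ≤ c1 k / (2 * π ^ 2) := fun k => hkey k _ (hBge k)
  have hf0 : ∀ p k, 0 ≤ f p k := fun p k => div_nonneg (hh0 k) (sq_nonneg _)
  have hg0 : ∀ k, 0 ≤ g k := fun k => div_nonneg (hh0 k) (sq_nonneg _)
  -- integrability of f p and g
  have hfmeas : ∀ p : X, AEStronglyMeasurable (f p) volume := by
    intro p
    have hcont : Continuous fun k : E3 => ‖P p - k‖ ^ 2 + (S p + ‖k‖) + α ^ 3 :=
      (((continuous_const.sub continuous_id).norm.pow 2).add
        (continuous_const.add continuous_norm)).add continuous_const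
    exact (hhm.div ((hcont.pow 2).measurable)).aestronglyMeasurable
  have hfi : ∀ p : X, Integrable (f p) := by
    intro p
    refine (hc1.div_const (2 * π ^ 2)).mono' (hfmeas p) (ae_of_all _ fun k => ?_)
    rw [Real.norm_eq_abs, abs_of_nonneg (hf0 p k)]
    exact hfle p k
  have hgmeas : AEStronglyMeasurable g volume := by
    have hcont : Continuous fun k : E3 => (‖k‖ ^ 2 + ‖k‖) ^ 2 :=
      ((continuous_norm.pow 2).add continuous_norm).pow 2
    exact (hhm.div hcont.measurable).aestronglyMeasurable
  have hgi : Integrable g := by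
    refine (hc1.div_const (2 * π ^ 2)).mono' hgmeas (ae_of_all _ fun k => ?_)
    rw [Real.norm_eq_abs, abs_of_nonneg (hg0 k)]
    exact hgle k
  set J := ∫ k, g k with hJdef
  set I : X → ℝ := fun p => ∫ k, f p k with hIdef
  -- set-integral equals ∫ g
  have hSet : (∫ k in {k : E3 | ‖k‖ ≤ Λ}, (‖k‖ / (2 * π ^ 2)) / (‖k‖ ^ 2 + ‖k‖) ^ 2) = J := by
    rw [hJdef, ← integral_indicator (measurableSet_le measurable_norm measurable_const)]
    congr 1
    funext k
    rw [indicator_apply]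
    dsimp [g, hfun]
    by_cases hk : ‖k‖ ≤ Λ
    · simp [hk]
    · simp [hk]
  -- product integrability
  have hFint : Integrable
      (fun z : X × E3 => hfun z.2 * w z.1 / (‖P z.1 - z.2‖ ^ 2 + (S z.1 + ‖z.2‖) + α ^ 3) ^ 2)
      volume := by
    rw [MeasureTheory.Measure.volume_eq_prod]
    have hasm : AEStronglyMeasurable
        (fun z : X × E3 => hfun z.2 * w z.1 /
          (‖P z.1 - z.2‖ ^ 2 + (S z.1 + ‖z.2‖) + α ^ 3) ^ 2) (volume.prod volume) := by
      have hcont : Continuous fun z : X × E3 =>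
          (‖P z.1 - z.2‖ ^ 2 + (S z.1 + ‖z.2‖) + α ^ 3) ^ 2 := by
        have : Continuous fun z : X × E3 =>
            ‖P z.1 - z.2‖ ^ 2 + (S z.1 + ‖z.2‖) + α ^ 3 :=
          ((((hPc.comp continuous_fst).sub continuous_snd).norm.pow 2).add
            ((hSc.comp continuous_fst).add continuous_snd.norm)).add continuous_const
        exact this.pow 2
      exact (((hhm.comp measurable_snd).aemeasurable.mul
        hwm.comp_fst.aemeasurable).div hcont.measurable.aemeasurable).aestronglyMeasurable
    refine (Integrable.mul_prod hψ2 (hc1.div_const (2 * π ^ 2))).mono' hasm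
      (ae_of_all _ fun z => ?_)
    have hb := hfle z.1 z.2
    have h0 := hf0 z.1 z.2
    rw [Real.norm_eq_abs]
    have e : hfun z.2 * w z.1 / (‖P z.1 - z.2‖ ^ 2 + (S z.1 + ‖z.2‖) + α ^ 3) ^ 2
        = f z.1 z.2 * w z.1 := by
      dsimp [f]; ring
    rw [e, abs_of_nonneg (mul_nonneg h0 (hw0 z.1))]
    calc f z.1 z.2 * w z.1 ≤ (c1 z.2 / (2 * π ^ 2)) * w z.1 :=
          mul_le_mul_of_nonneg_right hb (hw0 z.1)
      _ = ‖ψ z.1.1 z.1.2‖ ^ 2 * (c1 z.2 / (2 * π ^ 2)) := by rw [mul_comm]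
  -- Fubini
  have hBig : (∫ z : X × E3,
      hfun z.2 * w z.1 / (‖P z.1 - z.2‖ ^ 2 + (S z.1 + ‖z.2‖) + α ^ 3) ^ 2)
      = ∫ p : X, w p * I p := by
    rw [MeasureTheory.Measure.volume_eq_prod, integral_prod _ hFint]
    congr 1
    funext p
    have e : ∀ k : E3, hfun k * w p / (‖P p - k‖ ^ 2 + (S p + ‖k‖) + α ^ 3) ^ 2
        = w p * f p k := by
      intro k; dsimp [f]; ring
    simp_rw [e]
    exact integral_const_mul _ _
  have hIψint : Integrable (fun p : X => w p * I p) volume := by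
    have h1 := hFint
    rw [MeasureTheory.Measure.volume_eq_prod] at h1
    have h2 := h1.integral_prod_left
    refine h2.congr (ae_of_all _ fun p => ?_)
    have e : ∀ k : E3, hfun k * w p / (‖P p - k‖ ^ 2 + (S p + ‖k‖) + α ^ 3) ^ 2
        = w p * f p k := by
      intro k; dsimp [f]; ring
    simp_rw [e]
    exact integral_const_mul _ _
  -- defeq transfers of hypotheses
  have hP2' : Integrable (fun p : X => ‖P p‖ ^ 2 * w p) volume := hP2
  have hHf' : Integrable (fun p : X => S p * w p) volume := hHf
  -- integrability of ‖P p‖ * w p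
  have hPwm : AEStronglyMeasurable (fun p : X => ‖P p‖ * w p) volume :=
    hPc.norm.aestronglyMeasurable.mul hwm
  have hPw : Integrable (fun p : X => ‖P p‖ * w p) volume := by
    have hsum : Integrable (fun p : X => w p + ‖P p‖ ^ 2 * w p) volume := hψ2.add hP2'
    refine hsum.mono' hPwm (ae_of_all _ fun p => ?_)
    rw [Real.norm_eq_abs, abs_of_nonneg (mul_nonneg (norm_nonneg _) (hw0 p))]
    nlinarith [mul_nonneg (hw0 p) (sq_nonneg (‖P p‖ - 1)),
      mul_nonneg (sq_nonneg ‖P p‖) (hw0 p), hw0 p]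
  -- pointwise bound on I p - J
  have hIJ : ∀ p : X, |I p - J| ≤ (‖P p‖ ^ 2 + S p + α ^ 3) / π ^ 2 * C2
      + 2 * ‖P p‖ / π ^ 2 * C1 := by
    intro p
    have hsub : I p - J = ∫ k, (f p k - g k) := (integral_sub (hfi p) hgi).symm
    rw [hsub]
    have habs : |∫ k, (f p k - g k)| ≤ ∫ k, |f p k - g k| := by
      simpa [Real.norm_eq_abs] using norm_integral_le_integral_norm (fun k => f p k - g k)
    refine habs.trans ?_
    have hptw : ∀ k : E3, |f p k - g k| ≤ (‖P p‖ ^ 2 + S p + α ^ 3) / π ^ 2 * c2 k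
        + 2 * ‖P p‖ / π ^ 2 * c1 k := by
      intro k
      exact pointwise_bound Λ α (S p) hα (hS0 p) (P p) k
    calc (∫ k, |f p k - g k|)
        ≤ ∫ k, ((‖P p‖ ^ 2 + S p + α ^ 3) / π ^ 2 * c2 k + 2 * ‖P p‖ / π ^ 2 * c1 k) := by
          refine integral_mono_of_nonneg (ae_of_all _ fun k => abs_nonneg _)
            ((hc2.const_mul _).add (hc1.const_mul _)) (ae_of_all _ hptw)
      _ = (‖P p‖ ^ 2 + S p + α ^ 3) / π ^ 2 * C2 + 2 * ‖P p‖ / π ^ 2 * C1 := by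
          rw [integral_add (hc2.const_mul _) (hc1.const_mul _), integral_const_mul,
            integral_const_mul]
  -- rearrangement of the difference
  have hwJ : Integrable (fun p : X => w p * J) volume := hψ2.mul_const J
  have hkey2 : (∫ p : X, w p * I p) - (∫ p : X, w p) * J = ∫ p : X, w p * (I p - J) := by
    simp_rw [mul_sub]
    rw [integral_sub hIψint hwJ, integral_mul_const]
  -- integrable upper bound
  have i1 : Integrable (fun p : X => (C2 / π ^ 2) * (‖P p‖ ^ 2 * w p)) volume :=
    hP2'.const_mul _
  have i2 : Integrable (fun p : X => (C2 / π ^ 2) * (S p * w p)) volume := hHf'.const_mul _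
  have i3 : Integrable (fun p : X => (C2 / π ^ 2) * (α ^ 3 * w p)) volume :=
    (hψ2.const_mul (α ^ 3)).const_mul _
  have i4 : Integrable (fun p : X => (2 * C1 / π ^ 2) * (‖P p‖ * w p)) volume :=
    hPw.const_mul _
  have i12 : Integrable (fun p : X =>
      (C2 / π ^ 2) * (‖P p‖ ^ 2 * w p) + (C2 / π ^ 2) * (S p * w p)) volume := i1.add i2
  have i123 : Integrable (fun p : X =>
      (C2 / π ^ 2) * (‖P p‖ ^ 2 * w p) + (C2 / π ^ 2) * (S p * w p)
      + (C2 / π ^ 2) * (α ^ 3 * w p)) volume := i12.add i3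
  have hboundInt : Integrable (fun p : X =>
      (C2 / π ^ 2) * (‖P p‖ ^ 2 * w p) + (C2 / π ^ 2) * (S p * w p)
      + (C2 / π ^ 2) * (α ^ 3 * w p) + (2 * C1 / π ^ 2) * (‖P p‖ * w p)) volume :=
    i123.add i4
  -- Cauchy-Schwarz
  have hCS : (∫ p : X, ‖P p‖ * w p) ≤
      Real.sqrt (∫ p : X, w p) * Real.sqrt (∫ p : X, ‖P p‖ ^ 2 * w p) := by
    have hu2 : Integrable (fun p : X => ‖ψ p.1 p.2‖ ^ 2) volume := hψ2
    have hv2 : Integrable (fun p : X => (‖P p‖ * ‖ψ p.1 p.2‖) ^ 2) volume :=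
      hP2'.congr (ae_of_all _ fun p => by dsimp [w]; ring)
    have huv : Integrable (fun p : X => ‖ψ p.1 p.2‖ * (‖P p‖ * ‖ψ p.1 p.2‖)) volume :=
      hPw.congr (ae_of_all _ fun p => by dsimp [w]; ring)
    have := cs_integral hu2 hv2 huv
    have e1 : (∫ p : X, ‖ψ p.1 p.2‖ * (‖P p‖ * ‖ψ p.1 p.2‖)) = ∫ p : X, ‖P p‖ * w p :=
      integral_congr_ae (ae_of_all _ fun p => by dsimp [w]; ring)
    have e2 : (∫ p : X, ‖ψ p.1 p.2‖ ^ 2) = ∫ p : X, w p := rfl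
    have e3 : (∫ p : X, (‖P p‖ * ‖ψ p.1 p.2‖) ^ 2) = ∫ p : X, ‖P p‖ ^ 2 * w p :=
      integral_congr_ae (ae_of_all _ fun p => by dsimp [w]; ring)
    rw [e1, e2, e3] at this
    exact this
  -- final assembly
  show |(∫ z : X × E3,
        hfun z.2 * w z.1 / (‖P z.1 - z.2‖ ^ 2 + (S z.1 + ‖z.2‖) + α ^ 3) ^ 2)
      - (∫ p : X, w p) *
        ∫ k in {k : E3 | ‖k‖ ≤ Λ}, (‖k‖ / (2 * π ^ 2)) / (‖k‖ ^ 2 + ‖k‖) ^ 2|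
    ≤ (C2 / π ^ 2 + 2 * C1 / π ^ 2) * (α ^ 3 * (∫ p : X, w p)
        + Real.sqrt (∫ p : X, w p) * Real.sqrt (∫ p : X, ‖P p‖ ^ 2 * w p)
        + (∫ p : X, ‖P p‖ ^ 2 * w p) + ∫ p : X, S p * w p)
  rw [hSet, hBig, hkey2]
  have hA0 : 0 ≤ ∫ p : X, w p := integral_nonneg hw0
  have hB0 : 0 ≤ ∫ p : X, ‖P p‖ ^ 2 * w p :=
    integral_nonneg fun p => mul_nonneg (sq_nonneg _) (hw0 p)
  have hHF0 : 0 ≤ ∫ p : X, S p * w p :=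
    integral_nonneg fun p => mul_nonneg (hS0 p) (hw0 p)
  calc |∫ p : X, w p * (I p - J)|
      ≤ ∫ p : X, |w p * (I p - J)| := by
        simpa only [Real.norm_eq_abs] using
          norm_integral_le_integral_norm (μ := volume) (fun p : X => w p * (I p - J))
    _ ≤ ∫ p : X, ((C2 / π ^ 2) * (‖P p‖ ^ 2 * w p) + (C2 / π ^ 2) * (S p * w p)
        + (C2 / π ^ 2) * (α ^ 3 * w p) + (2 * C1 / π ^ 2) * (‖P p‖ * w p)) := by
        refine integral_mono_of_nonneg (ae_of_all _ fun p => abs_nonneg _) hboundInt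
          (ae_of_all _ fun p => ?_)
        dsimp only
        rw [abs_mul, abs_of_nonneg (hw0 p)]
        have h2 : w p * |I p - J| ≤ w p * ((‖P p‖ ^ 2 + S p + α ^ 3) / π ^ 2 * C2
            + 2 * ‖P p‖ / π ^ 2 * C1) := mul_le_mul_of_nonneg_left (hIJ p) (hw0 p)
        refine h2.trans (le_of_eq ?_)
        ring
    _ = (C2 / π ^ 2) * (∫ p : X, ‖P p‖ ^ 2 * w p) + (C2 / π ^ 2) * (∫ p : X, S p * w p)
        + (C2 / π ^ 2) * (α ^ 3 * (∫ p : X, w p))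
        + (2 * C1 / π ^ 2) * (∫ p : X, ‖P p‖ * w p) := by
        rw [integral_add i123 i4, integral_add i12 i3, integral_add i1 i2,
          integral_const_mul, integral_const_mul, integral_const_mul, integral_const_mul,
          integral_const_mul]
    _ ≤ (C2 / π ^ 2 + 2 * C1 / π ^ 2) * (α ^ 3 * (∫ p : X, w p)
        + Real.sqrt (∫ p : X, w p) * Real.sqrt (∫ p : X, ‖P p‖ ^ 2 * w p)
        + (∫ p : X, ‖P p‖ ^ 2 * w p) + ∫ p : X, S p * w p) := by
        have t1 : (0:ℝ) ≤ C2 / π ^ 2 := by positivity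
        have t2 : (0:ℝ) ≤ 2 * C1 / π ^ 2 := by positivity
        have hsq : (0:ℝ) ≤ Real.sqrt (∫ p : X, w p) * Real.sqrt (∫ p : X, ‖P p‖ ^ 2 * w p) :=
          mul_nonneg (Real.sqrt_nonneg _) (Real.sqrt_nonneg _)
        have h3 : (2 * C1 / π ^ 2) * (∫ p : X, ‖P p‖ * w p)
            ≤ (2 * C1 / π ^ 2) * (Real.sqrt (∫ p : X, w p)
              * Real.sqrt (∫ p : X, ‖P p‖ ^ 2 * w p)) :=
          mul_le_mul_of_nonneg_left hCS t2
        nlinarith [mul_nonneg t1 hsq, mul_nonneg t2 hA0, mul_nonneg t2 hB0,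
          mul_nonneg t2 hHF0, mul_nonneg t1 (mul_nonneg (le_of_lt hα3) hA0),
          mul_nonneg t2 (mul_nonneg (le_of_lt hα3) hA0)]
end

section
/- Let Λ > 0 and 0 < α < 1. For every n ≥ 0 and every ψ ∈ L²(ℝ³ × (ℝ³)ⁿ; ℂ) with ‖Pψ‖ < ∞: ∫ |G(k_{n+1})|² |Pₙ|² |ψ(l,k₁,…,kₙ)|² / ( |P_{n+1}|² + H_f^{n+1} + α³ )² dl dk₁⋯dk_{n+1} ≤ (2/π) ln( (Λ + α³)/α³ ) ‖Pψ‖². -/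
open MeasureTheory Real Set Metric

local notation "E3" => EuclideanSpace ℝ (Fin 3)

lemma integrable_comp_norm_E3 {f : ℝ → ℝ}
    (hf : IntegrableOn (fun y => y ^ 2 * f y) (Set.Ioi 0) volume) :
    Integrable (fun x : E3 => f ‖x‖) volume := by
  have hdim : Module.finrank ℝ E3 = 3 := by simp [finrank_euclideanSpace]
  -- integrability wrt volumeIoiPow 2
  have h1 : Integrable (fun y : Set.Ioi (0:ℝ) => f y) (Measure.volumeIoiPow 2) := by
    rw [Measure.volumeIoiPow]
    rw [integrable_withDensity_iff ((measurable_subtype_coe.pow_const 2).ennreal_ofReal) (Filter.Eventually.of_forall fun _ => ENNReal.ofReal_lt_top)]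
    have : (fun y : Set.Ioi (0:ℝ) => f y * (ENNReal.ofReal ((y:ℝ) ^ 2)).toReal)
        = (fun y : ℝ => y ^ 2 * f y) ∘ Subtype.val := by
      funext y
      simp [ENNReal.toReal_ofReal (sq_nonneg (y:ℝ)), mul_comm]
    rw [this]
    rw [← (MeasurableEmbedding.subtype_coe measurableSet_Ioi).integrable_map_iff,
      map_comap_subtype_coe measurableSet_Ioi]
    exact hf
  have h2 : Integrable (fun z : Metric.sphere (0:E3) 1 × Set.Ioi (0:ℝ) => f z.2)
      ((volume : Measure E3).toSphere.prod (Measure.volumeIoiPow 2)) := by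
    have := (integrable_const (1:ℝ) (μ := (volume : Measure E3).toSphere)).mul_prod h1
    simpa using this
  have h3 : Integrable ((fun x : ({(0:E3)}ᶜ : Set E3) => f ‖x.1‖)) (volume.comap Subtype.val) := by
    have hmp := (volume : Measure E3).measurePreserving_homeomorphUnitSphereProd
    rw [hdim] at hmp
    have := (hmp.integrable_comp_emb (Homeomorph.measurableEmbedding _)).2 h2
    convert this using 1
    funext x
    simp [homeomorphUnitSphereProd, homeomorphSphereProd]
  have h4 : IntegrableOn (fun x : E3 => f ‖x‖) ({(0:E3)}ᶜ) volume := by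
    rw [IntegrableOn, ← map_comap_subtype_coe (measurableSet_singleton (0:E3)).compl,
      (MeasurableEmbedding.subtype_coe (measurableSet_singleton (0:E3)).compl).integrable_map_iff]
    exact h3
  rwa [IntegrableOn, restrict_compl_singleton] at h4

lemma integral_comp_norm_E3 (f : ℝ → ℝ) :
    ∫ x : E3, f ‖x‖ = (4 * π) * ∫ y in Set.Ioi (0:ℝ), y ^ 2 * f y := by
  have h := MeasureTheory.integral_fun_norm_addHaar (volume : Measure E3) f
  have hdim : Module.finrank ℝ E3 = 3 := by simp [finrank_euclideanSpace]
  rw [hdim] at h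
  have hball : (volume (ball (0:E3) 1)).toReal = 4 * π / 3 := by
    rw [EuclideanSpace.volume_ball]
    have hΓ : Real.Gamma ((Fintype.card (Fin 3) : ℝ) / 2 + 1) = 3 / 4 * √π := by
      have : (Fintype.card (Fin 3) : ℝ) / 2 + 1 = (1/2 : ℝ) + 1 + 1 := by
        simp [Fintype.card_fin]; ring
      rw [this, Real.Gamma_add_one (by norm_num), Real.Gamma_add_one (by norm_num),
        Real.Gamma_one_half_eq]
      ring
    rw [hΓ]
    have hsq : (0:ℝ) < √π := Real.sqrt_pos.2 pi_pos
    rw [ENNReal.toReal_mul, ENNReal.toReal_pow, ENNReal.toReal_ofReal zero_le_one,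
      ENNReal.toReal_ofReal (by positivity)]
    have hπ3 : √π ^ Fintype.card (Fin 3) = π * √π := by
      simp only [Fintype.card_fin]
      rw [pow_succ, sq_sqrt pi_pos.le]
    rw [hπ3]
    field_simp
    ring
  rw [h, measureReal_def, hball]
  simp only [smul_eq_mul, nsmul_eq_mul]
  rw [← MeasureTheory.integral_const_mul, ← MeasureTheory.integral_const_mul,
    ← MeasureTheory.integral_const_mul]
  refine MeasureTheory.integral_congr_ae (Filter.Eventually.of_forall fun y => ?_)
  push_cast
  ring

lemma F_integrableOn {Λ a : ℝ} (hΛ : 0 < Λ) (ha : 0 < a) :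
    IntegrableOn (fun y : ℝ => y ^ 2 * ((if y ≤ Λ then 1 / (2 * π ^ 2 * y) else 0) / (y + a) ^ 2))
      (Set.Ioi 0) volume := by
  set F : ℝ → ℝ := fun y => y ^ 2 * ((if y ≤ Λ then 1 / (2 * π ^ 2 * y) else 0) / (y + a) ^ 2)
    with hF
  have hFm : Measurable F := by
    apply Measurable.mul (by fun_prop)
    apply Measurable.div _ (by fun_prop)
    exact Measurable.ite measurableSet_Iic (by fun_prop) measurable_const
  have h1 : IntegrableOn F (Set.Ioc 0 Λ) volume := by
    refine Integrable.mono' (g := fun _ => Λ / (2 * π ^ 2 * a ^ 2))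
      ((integrable_const _)) hFm.aestronglyMeasurable ?_
    refine (MeasureTheory.ae_restrict_iff' measurableSet_Ioc).2
      (Filter.Eventually.of_forall fun y hy => ?_)
    obtain ⟨hy0, hyΛ⟩ := hy
    have hFy : F y = y / (2 * π ^ 2 * (y + a) ^ 2) := by
      rw [hF]
      simp only [if_pos hyΛ]
      field_simp
    rw [hFy, Real.norm_eq_abs, abs_of_nonneg (by positivity)]
    apply div_le_div₀ (by positivity) hyΛ (by positivity)
    have : a ^ 2 ≤ (y + a) ^ 2 := by nlinarith
    nlinarith [pi_pos]
  have h2 : IntegrableOn F (Set.Ioi Λ) volume := by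
    refine (integrableOn_congr_fun (fun y hy => ?_) measurableSet_Ioi).2
      (integrableOn_zero)
    rw [hF]
    simp only [if_neg (not_le.2 (Set.mem_Ioi.1 hy)), zero_div, mul_zero]
  have : Set.Ioi (0:ℝ) = Set.Ioc 0 Λ ∪ Set.Ioi Λ := (Set.Ioc_union_Ioi_eq_Ioi hΛ.le).symm
  rw [this]
  exact h1.union h2

lemma F_integral_le {Λ a : ℝ} (hΛ : 0 < Λ) (ha : 0 < a) :
    ∫ y in Set.Ioi (0:ℝ),
        y ^ 2 * ((if y ≤ Λ then 1 / (2 * π ^ 2 * y) else 0) / (y + a) ^ 2) ≤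
      1 / (2 * π ^ 2) * Real.log ((Λ + a) / a) := by
  set F : ℝ → ℝ := fun y => y ^ 2 * ((if y ≤ Λ then 1 / (2 * π ^ 2 * y) else 0) / (y + a) ^ 2)
    with hF
  have hsplit : Set.Ioi (0:ℝ) = Set.Ioc 0 Λ ∪ Set.Ioi Λ := (Set.Ioc_union_Ioi_eq_Ioi hΛ.le).symm
  have hint := F_integrableOn hΛ ha
  rw [hsplit] at hint
  have h2zero : ∫ y in Set.Ioi Λ, F y = 0 := by
    refine MeasureTheory.setIntegral_eq_zero_of_forall_eq_zero fun y hy => ?_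
    rw [hF]; simp only [if_neg (not_le.2 (Set.mem_Ioi.1 hy)), zero_div, mul_zero]
  have hIoc : ∫ y in Set.Ioc 0 Λ, F y ≤ 1 / (2 * π ^ 2) * Real.log ((Λ + a) / a) := by
    have hmono : ∫ y in Set.Ioc 0 Λ, F y ≤
        ∫ y in Set.Ioc 0 Λ, 1 / (2 * π ^ 2) * (y + a)⁻¹ := by
      refine MeasureTheory.setIntegral_mono_on
        (hint.mono_set Set.subset_union_left) ?_ measurableSet_Ioc fun y hy => ?_
      · refine (ContinuousOn.integrableOn_Icc ?_).mono_set Set.Ioc_subset_Icc_self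
        refine continuousOn_const.mul (ContinuousOn.inv₀ (by fun_prop) fun y hy => ?_)
        have : (0:ℝ) ≤ y := hy.1
        positivity
      · obtain ⟨hy0, hyΛ⟩ := hy
        have hFy : F y = y / (2 * π ^ 2 * (y + a) ^ 2) := by
          rw [hF]; simp only [if_pos hyΛ]; field_simp
        rw [hFy]
        rw [div_le_iff₀ (by positivity)]
        have : (1:ℝ) / (2 * π ^ 2) * (y + a)⁻¹ * (2 * π ^ 2 * (y + a) ^ 2) = y + a := by
          field_simp
        rw [this]
        linarith
    have hval : ∫ y in Set.Ioc 0 Λ, 1 / (2 * π ^ 2) * (y + a)⁻¹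
        = 1 / (2 * π ^ 2) * Real.log ((Λ + a) / a) := by
      rw [MeasureTheory.integral_const_mul]
      congr 1
      rw [← intervalIntegral.integral_of_le hΛ.le]
      have := intervalIntegral.integral_comp_add_right (a := 0) (b := Λ) (fun x : ℝ => x⁻¹) a
      rw [this, zero_add]
      exact integral_inv (by
        intro h
        rcases Set.mem_uIcc.1 h with ⟨h1, _⟩ | ⟨_, h2⟩ <;> nlinarith)
    linarith
  rw [hsplit, MeasureTheory.setIntegral_union (Set.Ioc_disjoint_Ioi le_rfl) measurableSet_Ioi
    (hint.mono_set Set.subset_union_left) (hint.mono_set Set.subset_union_right), h2zero,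
    add_zero]
  exact hIoc

/-- Diagonal part of Step 2 of Lemma B.1: with `|G(k)|² = χ(|k|)²/(2π²|k|)`,
`∫ |G(k_{n+1})|² |Pₙ|² |ψ|² / (|P_{n+1}|² + H_f^{n+1} + α³)² dl dk₁⋯dk_{n+1}
  ≤ (2/π) ln((Λ+α³)/α³) ‖Pψ‖²`. -/
theorem PD_diagonal_bound (Λ α : ℝ) (hΛ : 0 < Λ) (hα : 0 < α) (hα1 : α < 1)
    (n : ℕ)
    (ψ : EuclideanSpace ℝ (Fin 3) → (Fin n → EuclideanSpace ℝ (Fin 3)) → ℂ)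
    (hmeas : AEStronglyMeasurable
      (fun p : EuclideanSpace ℝ (Fin 3) × (Fin n → EuclideanSpace ℝ (Fin 3)) =>
        ψ p.1 p.2) volume)
    (hP : Integrable
      (fun p : EuclideanSpace ℝ (Fin 3) × (Fin n → EuclideanSpace ℝ (Fin 3)) =>
        ‖p.1 - ∑ i, p.2 i‖ ^ 2 * ‖ψ p.1 p.2‖ ^ 2) volume) :
    (∫ p : (EuclideanSpace ℝ (Fin 3) × (Fin n → EuclideanSpace ℝ (Fin 3))) ×
          EuclideanSpace ℝ (Fin 3),
        (if ‖p.2‖ ≤ Λ then 1 / (2 * π ^ 2 * ‖p.2‖) else 0) *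
          (‖p.1.1 - ∑ i, p.1.2 i‖ ^ 2 * ‖ψ p.1.1 p.1.2‖ ^ 2) /
          (‖p.1.1 - (∑ i, p.1.2 i) - p.2‖ ^ 2 +
            ((∑ i, ‖p.1.2 i‖) + ‖p.2‖) + α ^ 3) ^ 2) ≤
      (2 / π) * Real.log ((Λ + α ^ 3) / α ^ 3) *
        ∫ p : EuclideanSpace ℝ (Fin 3) × (Fin n → EuclideanSpace ℝ (Fin 3)),
          ‖p.1 - ∑ i, p.2 i‖ ^ 2 * ‖ψ p.1 p.2‖ ^ 2 := by
  have hπ := Real.pi_pos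
  have ha3 : 0 < α ^ 3 := by positivity
  set L := Real.log ((Λ + α ^ 3) / α ^ 3) with hL
  set w : EuclideanSpace ℝ (Fin 3) × (Fin n → EuclideanSpace ℝ (Fin 3)) → ℝ :=
    fun q => ‖q.1 - ∑ i, q.2 i‖ ^ 2 * ‖ψ q.1 q.2‖ ^ 2 with hw
  set g : EuclideanSpace ℝ (Fin 3) → ℝ :=
    fun k => (if ‖k‖ ≤ Λ then 1 / (2 * π ^ 2 * ‖k‖) else 0) / (‖k‖ + α ^ 3) ^ 2 with hg
  have hgi : Integrable g volume :=
    integrable_comp_norm_E3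
      (f := fun r => (if r ≤ Λ then 1 / (2 * π ^ 2 * r) else 0) / (r + α ^ 3) ^ 2)
      (F_integrableOn hΛ ha3)
  have hgnonneg : ∀ k, 0 ≤ g k := by
    intro k
    rw [hg]
    apply div_nonneg _ (by positivity)
    split
    · positivity
    · exact le_refl 0
  have hgval : ∫ k, g k ≤ 2 / π * L := by
    have hval := integral_comp_norm_E3
      (fun r => (if r ≤ Λ then 1 / (2 * π ^ 2 * r) else 0) / (r + α ^ 3) ^ 2)
    have hle := F_integral_le hΛ ha3
    calc (∫ k, g k)
        = 4 * π * ∫ y in Set.Ioi (0:ℝ),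
          y ^ 2 * ((if y ≤ Λ then 1 / (2 * π ^ 2 * y) else 0) / (y + α ^ 3) ^ 2) := hval
      _ ≤ 4 * π * (1 / (2 * π ^ 2) * L) := mul_le_mul_of_nonneg_left hle (by positivity)
      _ = 2 / π * L := by field_simp; ring
  have hw_nonneg : ∀ q, 0 ≤ w q := fun q => by rw [hw]; positivity
  have hprod : Integrable
      (fun p : (EuclideanSpace ℝ (Fin 3) × (Fin n → EuclideanSpace ℝ (Fin 3))) ×
        EuclideanSpace ℝ (Fin 3) => w p.1 * g p.2) volume := by
    rw [MeasureTheory.Measure.volume_eq_prod]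
    exact hP.mul_prod hgi
  have hprodval : (∫ p : (EuclideanSpace ℝ (Fin 3) × (Fin n → EuclideanSpace ℝ (Fin 3))) ×
        EuclideanSpace ℝ (Fin 3), w p.1 * g p.2) = (∫ q, w q) * ∫ k, g k := by
    rw [MeasureTheory.Measure.volume_eq_prod]
    exact MeasureTheory.integral_prod_mul w g
  have hpoint : ∀ p : (EuclideanSpace ℝ (Fin 3) × (Fin n → EuclideanSpace ℝ (Fin 3))) ×
      EuclideanSpace ℝ (Fin 3),
      (if ‖p.2‖ ≤ Λ then 1 / (2 * π ^ 2 * ‖p.2‖) else 0) *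
          (‖p.1.1 - ∑ i, p.1.2 i‖ ^ 2 * ‖ψ p.1.1 p.1.2‖ ^ 2) /
          (‖p.1.1 - (∑ i, p.1.2 i) - p.2‖ ^ 2 +
            ((∑ i, ‖p.1.2 i‖) + ‖p.2‖) + α ^ 3) ^ 2 ≤ w p.1 * g p.2 := by
    intro p
    have haa0 : 0 ≤ (if ‖p.2‖ ≤ Λ then 1 / (2 * π ^ 2 * ‖p.2‖) else 0) := by
      split
      · positivity
      · exact le_refl 0
    have hwp : 0 ≤ ‖p.1.1 - ∑ i, p.1.2 i‖ ^ 2 * ‖ψ p.1.1 p.1.2‖ ^ 2 := by positivity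
    have hD : ‖p.2‖ + α ^ 3 ≤ ‖p.1.1 - (∑ i, p.1.2 i) - p.2‖ ^ 2 +
        ((∑ i, ‖p.1.2 i‖) + ‖p.2‖) + α ^ 3 := by
      have h1 : 0 ≤ ‖p.1.1 - (∑ i, p.1.2 i) - p.2‖ ^ 2 := sq_nonneg _
      have h2 : 0 ≤ ∑ i, ‖p.1.2 i‖ := Finset.sum_nonneg fun i _ => norm_nonneg _
      linarith
    have hs : 0 < (‖p.2‖ + α ^ 3) ^ 2 := by positivity
    have hD2 : (‖p.2‖ + α ^ 3) ^ 2 ≤ (‖p.1.1 - (∑ i, p.1.2 i) - p.2‖ ^ 2 +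
        ((∑ i, ‖p.1.2 i‖) + ‖p.2‖) + α ^ 3) ^ 2 :=
      pow_le_pow_left₀ (by positivity) hD 2
    calc (if ‖p.2‖ ≤ Λ then 1 / (2 * π ^ 2 * ‖p.2‖) else 0) *
          (‖p.1.1 - ∑ i, p.1.2 i‖ ^ 2 * ‖ψ p.1.1 p.1.2‖ ^ 2) /
          (‖p.1.1 - (∑ i, p.1.2 i) - p.2‖ ^ 2 +
            ((∑ i, ‖p.1.2 i‖) + ‖p.2‖) + α ^ 3) ^ 2
        ≤ (if ‖p.2‖ ≤ Λ then 1 / (2 * π ^ 2 * ‖p.2‖) else 0) *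
          (‖p.1.1 - ∑ i, p.1.2 i‖ ^ 2 * ‖ψ p.1.1 p.1.2‖ ^ 2) / (‖p.2‖ + α ^ 3) ^ 2 :=
          div_le_div_of_nonneg_left (mul_nonneg haa0 hwp) hs hD2
      _ = w p.1 * g p.2 := by
          rw [hw, hg]
          dsimp only
          ring
  have hfnonneg : ∀ p : (EuclideanSpace ℝ (Fin 3) × (Fin n → EuclideanSpace ℝ (Fin 3))) ×
      EuclideanSpace ℝ (Fin 3),
      0 ≤ (if ‖p.2‖ ≤ Λ then 1 / (2 * π ^ 2 * ‖p.2‖) else 0) *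
          (‖p.1.1 - ∑ i, p.1.2 i‖ ^ 2 * ‖ψ p.1.1 p.1.2‖ ^ 2) /
          (‖p.1.1 - (∑ i, p.1.2 i) - p.2‖ ^ 2 +
            ((∑ i, ‖p.1.2 i‖) + ‖p.2‖) + α ^ 3) ^ 2 := by
    intro p
    apply div_nonneg _ (sq_nonneg _)
    apply mul_nonneg _ (by positivity)
    split
    · positivity
    · exact le_refl 0
  calc (∫ p : (EuclideanSpace ℝ (Fin 3) × (Fin n → EuclideanSpace ℝ (Fin 3))) ×
          EuclideanSpace ℝ (Fin 3),
        (if ‖p.2‖ ≤ Λ then 1 / (2 * π ^ 2 * ‖p.2‖) else 0) *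
          (‖p.1.1 - ∑ i, p.1.2 i‖ ^ 2 * ‖ψ p.1.1 p.1.2‖ ^ 2) /
          (‖p.1.1 - (∑ i, p.1.2 i) - p.2‖ ^ 2 +
            ((∑ i, ‖p.1.2 i‖) + ‖p.2‖) + α ^ 3) ^ 2)
      ≤ ∫ p : (EuclideanSpace ℝ (Fin 3) × (Fin n → EuclideanSpace ℝ (Fin 3))) ×
          EuclideanSpace ℝ (Fin 3), w p.1 * g p.2 :=
        MeasureTheory.integral_mono_of_nonneg (Filter.Eventually.of_forall hfnonneg) hprod
          (Filter.Eventually.of_forall hpoint)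
    _ = (∫ q, w q) * ∫ k, g k := hprodval
    _ ≤ (∫ q, w q) * (2 / π * L) :=
        mul_le_mul_of_nonneg_left hgval (MeasureTheory.integral_nonneg hw_nonneg)
    _ = 2 / π * L * ∫ q, w q := mul_comm _ _
end
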